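/- Let $\mathscr{T}$ be an expanded tree with $\mathscr{T} \to (\mathscr{T})^{\mathrm{end}(1)}_\sigma$ for an infinite cardinal $\sigma$. Then $\mathscr{T} \to (\mathscr{T})^n_\sigma$ for every $n < \omega$: for every coloring $\mathbf{c} : \mathrm{eseq}_n(\mathscr{T}) \to \sigma$ there is an embedding $g$ of $\mathscr{T}$ into itself such that $\mathbf{c}(g(\bar{a})) = \mathbf{c}(g(\bar{b}))$ whenever $\bar{a}, \bar{b} \in \mathrm{eseq}_n(\mathscr{T})$ are $\mathscr{T}$-similar. -/

import Mathlib

open scoped Classical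

noncomputable section

/-- Binary sequences of ordinal length `< α`, coded as functions `Ordinal → Option Bool`
which are `some` exactly below some length `l < α`. -/
def IsBSeq (α : Ordinal) (f : Ordinal → Option Bool) : Prop :=
  ∃ l < α, ∀ β, (f β).isSome ↔ β < l

/-- The length of a coded sequence. -/
def slen (f : Ordinal → Option Bool) : Ordinal :=
  sInf {β | f β = none}

/-- Restriction of a sequence to length `δ`. -/
def srestrict (f : Ordinal → Option Bool) (δ : Ordinal) : Ordinal → Option Bool :=
  fun β => if β < δ then f β else none

/-- The longest common initial segment (meet) of two sequences. -/
def smeet (f g : Ordinal → Option Bool) : Ordinal → Option Bool :=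
  srestrict f (sInf {β | ¬(f β = g β ∧ (f β).isSome)})

/-- `sprefix f g` : `f` is an initial segment of `g`. -/
def sprefix (f g : Ordinal → Option Bool) : Prop :=
  ∀ β, (f β).isSome → g β = f β


/-- Abbreviation for coded binary sequences. -/
abbrev BS := Ordinal → Option Bool

/-- The successor (branching) relations: `sR b f g` iff `g` extends `f⌢⟨b⟩`,
i.e. `f ⊴ g` and `g` takes value `b` at the level of `f`. -/
def sR (b : Bool) (f g : BS) : Prop :=
  sprefix f g ∧ g (slen f) = some b

/-- Definition 1.7(1): `eseq_n` relative to a subtree `T` of `{}^{<κ}2` with level-respecting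
well order `lst`: `a` is `lst`-increasing, its members lie in `T`, it is closed under meets,
and closed under restriction of one entry to the level of another. -/
def Eseq (T : Set BS) (lst : BS → BS → Prop) (n : ℕ) (a : Fin n → BS) : Prop :=
  (∀ i, a i ∈ T) ∧
  (∀ i j : Fin n, i < j → lst (a i) (a j)) ∧
  (∀ i j : Fin n, ∃ m, smeet (a i) (a j) = a m) ∧
  (∀ i j : Fin n, slen (a i) ≤ slen (a j) → ∃ m, srestrict (a j) (slen (a i)) = a m)

/-- Definition 1.7(3): `𝒯`-similarity of `n`-tuples: corresponding indices satisfy the same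
tree-order relations, the same branching relations `R₀, R₁`, the same meet identities,
and the same level comparisons. -/
def TSimilar (n : ℕ) (a b : Fin n → BS) : Prop :=
  ∀ k i m : Fin n,
    (sprefix (a k) (a i) ↔ sprefix (b k) (b i)) ∧
    (∀ c : Bool, sR c (a k) (a i) ↔ sR c (b k) (b i)) ∧
    (smeet (a k) (a i) = a m ↔ smeet (b k) (b i) = b m) ∧
    (slen (a k) ≤ slen (a i) ↔ slen (b k) ≤ slen (b i))


/-- A `⊆`-embedding of the expanded tree `(T₂, lst₂)` into `(T₁, lst₁)` (Definition 1.4(1)):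
injective, preserving membership, the initial-segment order, the branching relations,
level comparisons (hence equality of levels), the well order, and meets. -/
def IsEmb (T2 T1 : Set BS) (lst2 lst1 : BS → BS → Prop) (g : BS → BS) : Prop :=
  (∀ x ∈ T2, g x ∈ T1) ∧
  (∀ x ∈ T2, ∀ y ∈ T2, g x = g y → x = y) ∧
  (∀ x ∈ T2, ∀ y ∈ T2,
    (sprefix x y ↔ sprefix (g x) (g y)) ∧
    (∀ c : Bool, sR c x y ↔ sR c (g x) (g y)) ∧
    (slen x ≤ slen y ↔ slen (g x) ≤ slen (g y)) ∧
    (lst2 x y ↔ lst1 (g x) (g y)) ∧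
    g (smeet x y) = smeet (g x) (g y))

/-- The number of levels of the tuple `a` lying strictly above `lev (a ℓ)`. -/
def TopCount (n : ℕ) (a : Fin n → BS) (ℓ : Fin n) : ℕ :=
  ((Finset.univ.image fun i => slen (a i)).filter fun x => slen (a ℓ) < x).card

/-- Definition 1.8(2): `𝒯₁ → (𝒯₂)^{end(k)}_σ` : for every coloring `c` of `eseq(𝒯₁)` by `σ`
there is an embedding `g` of `𝒯₂` into `𝒯₁` such that the induced coloring of two similar
closed tuples agrees whenever the tuples agree on all entries which are not among the top
`k` levels occurring in the tuple. -/
def ArrowEnd (T1 : Set BS) (lst1 : BS → BS → Prop) (T2 : Set BS)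
    (lst2 : BS → BS → Prop) (σ : Type*) (k : ℕ) : Prop :=
  ∀ c : (n : ℕ) → (Fin n → BS) → σ, ∃ g : BS → BS, IsEmb T2 T1 lst2 lst1 g ∧
    ∀ (n : ℕ) (a b : Fin n → BS), Eseq T2 lst2 n a → Eseq T2 lst2 n b →
      TSimilar n a b → (∀ ℓ : Fin n, k ≤ TopCount n a ℓ → b ℓ = a ℓ) →
      c n (fun i => g (a i)) = c n (fun i => g (b i))

section Basics

variable {κ : Ordinal} {f g p q : BS} {δ : Ordinal}

theorem IsBSeq.slen_char (hf : IsBSeq κ f) : ∀ β, (f β).isSome ↔ β < slen f := by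
  obtain ⟨l, -, hl⟩ := hf
  have hslen : slen f = l := by
    apply le_antisymm
    · apply csInf_le (OrderBot.bddBelow _)
      show f l = none
      have := (hl l).not.mpr (lt_irrefl l)
      simpa [Option.not_isSome_iff_eq_none] using this
    · apply le_csInf ⟨l, by simpa [Option.not_isSome_iff_eq_none] using (hl l).not.mpr (lt_irrefl l)⟩
      intro b hb
      by_contra hlt
      push_neg at hlt
      have : (f b).isSome := (hl b).mpr hlt
      rw [Set.mem_setOf_eq.mp hb] at this
      simp at this
  rw [hslen]; exact hl

theorem IsBSeq.none_iff (hf : IsBSeq κ f) {β : Ordinal} : f β = none ↔ slen f ≤ β := by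
  rw [← Option.not_isSome_iff_eq_none, hf.slen_char, not_lt]

theorem slen_srestrict_le : slen (srestrict f δ) ≤ δ := by
  apply csInf_le (OrderBot.bddBelow _)
  show srestrict f δ δ = none
  simp [srestrict]

theorem sprefix_srestrict : sprefix (srestrict f δ) f := by
  intro β hβ
  by_cases hlt : β < δ
  · simp [srestrict, hlt]
  · simp [srestrict, hlt] at hβ

theorem slen_smeet_le_left (hf : IsBSeq κ f) : slen (smeet f g) ≤ slen f := by
  have h1 : {β | f β = none} ⊆ {β | smeet f g β = none} := by
    intro β hβ
    simp only [Set.mem_setOf_eq] at *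
    simp [smeet, srestrict, hβ]
  obtain ⟨l, -, hl⟩ := hf
  have hne : {β | f β = none}.Nonempty :=
    ⟨l, by simpa [Option.not_isSome_iff_eq_none] using (hl l).not.mpr (lt_irrefl l)⟩
  exact csInf_le_csInf (OrderBot.bddBelow _) hne h1

theorem slen_srestrict_eq (hf : IsBSeq κ f) (h : δ ≤ slen f) : slen (srestrict f δ) = δ := by
  refine le_antisymm slen_srestrict_le ?_
  apply le_csInf ⟨δ, by show srestrict f δ δ = none; simp [srestrict]⟩
  intro b hb
  by_contra hlt
  push_neg at hlt
  have hb' : srestrict f δ b = none := hb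
  have : (f b).isSome := hf.slen_char b |>.mpr (lt_of_lt_of_le hlt h)
  rw [show f b = srestrict f δ b from by simp [srestrict, hlt], hb'] at this
  simp at this

theorem srestrict_of_sprefix (hp : IsBSeq κ p) (h : sprefix p q) :
    srestrict q (slen p) = p := by
  funext β
  by_cases hlt : β < slen p
  · have hs : (p β).isSome := hp.slen_char β |>.mpr hlt
    simp [srestrict, hlt, h β hs]
  · simp only [srestrict, if_neg hlt]
    exact (hp.none_iff.mpr (not_lt.mp hlt)).symm

end Basics
section Stype

/-- Classical indicator. -/
def tb (P : Prop) : Bool := if P then true else false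

theorem tb_eq_tb_iff {P Q : Prop} : tb P = tb Q ↔ (P ↔ Q) := by
  unfold tb
  by_cases hP : P <;> by_cases hQ : Q <;> simp [hP, hQ]

/-- The finite similarity-type datum of an `m`-tuple. -/
def SimTy (m : ℕ) : Type :=
  Fin m → Fin m → Fin m → Bool × Bool × Bool × Bool × Bool

instance (m : ℕ) : Fintype (SimTy m) := by unfold SimTy; infer_instance
instance (m : ℕ) : DecidableEq (SimTy m) := by unfold SimTy; infer_instance

def stype (m : ℕ) (a : Fin m → BS) : SimTy m := fun k i j =>
  (tb (sprefix (a k) (a i)), tb (sR false (a k) (a i)), tb (sR true (a k) (a i)),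
    tb (smeet (a k) (a i) = a j), tb (slen (a k) ≤ slen (a i)))

theorem similar_iff_stype {m : ℕ} {a b : Fin m → BS} :
    TSimilar m a b ↔ stype m a = stype m b := by
  constructor
  · intro hs
    funext k i j
    obtain ⟨h1, h2, h3, h4⟩ := hs k i j
    unfold stype
    simp only [Prod.mk.injEq]
    exact ⟨tb_eq_tb_iff.mpr h1, tb_eq_tb_iff.mpr (h2 false), tb_eq_tb_iff.mpr (h2 true),
      tb_eq_tb_iff.mpr h3, tb_eq_tb_iff.mpr h4⟩
  · intro hs
    intro k i j
    have := congrFun (congrFun (congrFun hs k) i) j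
    unfold stype at this
    simp only [Prod.mk.injEq] at this
    obtain ⟨h1, h2, h3, h4, h5⟩ := this
    refine ⟨tb_eq_tb_iff.mp h1, ?_, tb_eq_tb_iff.mp h4, tb_eq_tb_iff.mp h5⟩
    intro c
    cases c
    · exact tb_eq_tb_iff.mp h2
    · exact tb_eq_tb_iff.mp h3

theorem stype_slen_iff {m : ℕ} {w w' : Fin m → BS} (h : stype m w = stype m w')
    (k i : Fin m) : slen (w k) ≤ slen (w i) ↔ slen (w' k) ≤ slen (w' i) := by
  have := congrFun (congrFun (congrFun h k) i) k
  unfold stype at this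
  simp only [Prod.mk.injEq] at this
  exact tb_eq_tb_iff.mp this.2.2.2.2

/-- Indices not at the top level. -/
def lowIdx (m : ℕ) (w : Fin m → BS) : Finset (Fin m) :=
  Finset.univ.filter fun ℓ => ¬ ∀ i, slen (w i) ≤ slen (w ℓ)

theorem mem_lowIdx {m : ℕ} {w : Fin m → BS} {ℓ : Fin m} :
    ℓ ∈ lowIdx m w ↔ ∃ i, slen (w ℓ) < slen (w i) := by
  simp only [lowIdx, Finset.mem_filter, Finset.mem_univ, true_and, not_forall, not_le]

theorem lowIdx_eq_of_stype {m : ℕ} {w w' : Fin m → BS} (h : stype m w = stype m w') :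
    lowIdx m w = lowIdx m w' := by
  ext ℓ
  rw [mem_lowIdx, mem_lowIdx]
  constructor <;> rintro ⟨i, hi⟩ <;> refine ⟨i, ?_⟩
  · rw [lt_iff_not_ge] at hi ⊢
    exact fun hc => hi ((stype_slen_iff h i ℓ).mpr hc)
  · rw [lt_iff_not_ge] at hi ⊢
    exact fun hc => hi ((stype_slen_iff h i ℓ).mp hc)

theorem one_le_topCount_iff {m : ℕ} {w : Fin m → BS} {ℓ : Fin m} :
    1 ≤ TopCount m w ℓ ↔ ℓ ∈ lowIdx m w := by
  rw [mem_lowIdx, TopCount, Nat.one_le_iff_ne_zero, ← Nat.pos_iff_ne_zero, Finset.card_pos]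
  constructor
  · rintro ⟨x, hx⟩
    rw [Finset.mem_filter] at hx
    obtain ⟨hx1, hx2⟩ := hx
    obtain ⟨i, -, rfl⟩ := Finset.mem_image.mp hx1
    exact ⟨i, hx2⟩
  · rintro ⟨i, hi⟩
    exact ⟨slen (w i), Finset.mem_filter.mpr ⟨Finset.mem_image.mpr ⟨i, Finset.mem_univ i, rfl⟩, hi⟩⟩

end Stype
section Emb

variable {κ : Ordinal} {T : Set BS} {lst : BS → BS → Prop} {g g₁ g₂ : BS → BS}

theorem IsEmb.comp (h1 : IsEmb T T lst lst g₁) (h2 : IsEmb T T lst lst g₂) :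
    IsEmb T T lst lst (fun x => g₁ (g₂ x)) := by
  obtain ⟨m1, i1, p1⟩ := h1
  obtain ⟨m2, i2, p2⟩ := h2
  refine ⟨fun x hx => m1 _ (m2 x hx), fun x hx y hy hxy => i2 x hx y hy
    (i1 _ (m2 x hx) _ (m2 y hy) hxy), fun x hx y hy => ?_⟩
  obtain ⟨q1, q2, q3, q4, q5⟩ := p2 x hx y hy
  obtain ⟨r1, r2, r3, r4, r5⟩ := p1 _ (m2 x hx) _ (m2 y hy)
  refine ⟨q1.trans r1, fun c => (q2 c).trans (r2 c), q3.trans r3, q4.trans r4, ?_⟩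
  show g₁ (g₂ (smeet x y)) = smeet (g₁ (g₂ x)) (g₁ (g₂ y))
  rw [q5, r5]

theorem Eseq.map (hT : ∀ f ∈ T, IsBSeq κ f) (hg : IsEmb T T lst lst g)
    {m : ℕ} {a : Fin m → BS} (ha : Eseq T lst m a) :
    Eseq T lst m (fun i => g (a i)) := by
  obtain ⟨hmem, hinc, hmeet, hres⟩ := ha
  obtain ⟨gmem, ginj, gpres⟩ := hg
  refine ⟨fun i => gmem _ (hmem i), ?_, ?_, ?_⟩
  · intro i j hij
    exact ((gpres _ (hmem i) _ (hmem j)).2.2.2.1).mp (hinc i j hij)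
  · intro i j
    obtain ⟨m₀, hm₀⟩ := hmeet i j
    exact ⟨m₀, by rw [← (gpres _ (hmem i) _ (hmem j)).2.2.2.2, hm₀]⟩
  · intro i j hle
    have hle' : slen (a i) ≤ slen (a j) :=
      ((gpres _ (hmem i) _ (hmem j)).2.2.1).mpr hle
    obtain ⟨m₀, hm₀⟩ := hres i j hle'
    refine ⟨m₀, ?_⟩
    -- `a m₀ = srestrict (a j) (slen (a i))` : prefix of `a j` of length `slen (a i)`.
    have hpre : sprefix (a m₀) (a j) := by rw [← hm₀]; exact sprefix_srestrict
    have hlen : slen (a m₀) = slen (a i) := by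
      rw [← hm₀]; exact slen_srestrict_eq (hT _ (hmem j)) hle'
    have hpre' : sprefix (g (a m₀)) (g (a j)) :=
      ((gpres _ (hmem m₀) _ (hmem j)).1).mp hpre
    have hlen' : slen (g (a m₀)) = slen (g (a i)) := by
      apply le_antisymm
      · exact ((gpres _ (hmem m₀) _ (hmem i)).2.2.1).mp hlen.le
      · exact ((gpres _ (hmem i) _ (hmem m₀)).2.2.1).mp hlen.ge
    rw [← hlen']
    exact srestrict_of_sprefix (hT _ (gmem _ (hmem m₀))) hpre'

theorem stype_map (hg : IsEmb T T lst lst g) {m : ℕ} {a : Fin m → BS}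
    (ha : Eseq T lst m a) : stype m (fun i => g (a i)) = stype m a := by
  obtain ⟨hmem, hinc, hmeet, hres⟩ := ha
  obtain ⟨gmem, ginj, gpres⟩ := hg
  funext k i j
  unfold stype
  simp only [Prod.mk.injEq]
  refine ⟨tb_eq_tb_iff.mpr ((gpres _ (hmem k) _ (hmem i)).1).symm,
    tb_eq_tb_iff.mpr (((gpres _ (hmem k) _ (hmem i)).2.1 false)).symm,
    tb_eq_tb_iff.mpr (((gpres _ (hmem k) _ (hmem i)).2.1 true)).symm,
    tb_eq_tb_iff.mpr ?_,
    tb_eq_tb_iff.mpr ((gpres _ (hmem k) _ (hmem i)).2.2.1).symm⟩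
  constructor
  · intro hme
    obtain ⟨m₁, hm₁⟩ := hmeet k i
    have : g (a m₁) = g (a j) := by
      rw [← hm₁, (gpres _ (hmem k) _ (hmem i)).2.2.2.2, hme]
    rw [hm₁, ginj _ (hmem m₁) _ (hmem j) this]
  · intro hme
    rw [← (gpres _ (hmem k) _ (hmem i)).2.2.2.2, hme]

end Emb
section Sub

variable {κ : Ordinal} {T : Set BS} {lst : BS → BS → Prop}

theorem Eseq.sub (hT : ∀ f ∈ T, IsBSeq κ f) {m' mm : ℕ} {a : Fin m' → BS}
    (ha : Eseq T lst m' a) (e : Fin mm → Fin m') (he : StrictMono e)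
    (hme : ∀ i, e i ∈ lowIdx m' a) (hsurj : ∀ ℓ ∈ lowIdx m' a, ∃ i, e i = ℓ) :
    Eseq T lst mm (fun i => a (e i)) := by
  obtain ⟨hmem, hinc, hmeet, hres⟩ := ha
  refine ⟨fun i => hmem _, fun i j hij => hinc _ _ (he hij), ?_, ?_⟩
  · intro i j
    obtain ⟨m₀, hm₀⟩ := hmeet (e i) (e j)
    have hm₀low : m₀ ∈ lowIdx m' a := by
      obtain ⟨k, hk⟩ := mem_lowIdx.mp (hme i)
      refine mem_lowIdx.mpr ⟨k, lt_of_le_of_lt ?_ hk⟩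
      rw [← hm₀]
      exact slen_smeet_le_left (hT _ (hmem (e i)))
    obtain ⟨i₀, hi₀⟩ := hsurj m₀ hm₀low
    exact ⟨i₀, by rw [hm₀]; show a m₀ = a (e i₀); rw [hi₀]⟩
  · intro i j hle
    obtain ⟨m₀, hm₀⟩ := hres (e i) (e j) hle
    have hm₀low : m₀ ∈ lowIdx m' a := by
      obtain ⟨k, hk⟩ := mem_lowIdx.mp (hme i)
      refine mem_lowIdx.mpr ⟨k, lt_of_le_of_lt ?_ hk⟩
      rw [← hm₀]
      exact le_trans slen_srestrict_le le_rfl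
    obtain ⟨i₀, hi₀⟩ := hsurj m₀ hm₀low
    exact ⟨i₀, by rw [hm₀]; show a m₀ = a (e i₀); rw [hi₀]⟩

theorem TSimilar.sub {m' mm : ℕ} {a b : Fin m' → BS} (hs : TSimilar m' a b)
    (e : Fin mm → Fin m') : TSimilar mm (fun i => a (e i)) (fun i => b (e i)) :=
  fun k i j => hs (e k) (e i) (e j)

/-- `w` restricted to its non-top indices equals `u`. -/
def LowEq (m' : ℕ) (w : Fin m' → BS) (m : ℕ) (u : Fin m → BS) : Prop :=
  ∃ e : Fin m → Fin m', StrictMono e ∧ (∀ i, e i ∈ lowIdx m' w) ∧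
    (lowIdx m' w).card = m ∧ ∀ i, w (e i) = u i

theorem LowEq.agree {m' m : ℕ} {w w' : Fin m' → BS} {u : Fin m → BS}
    (h : LowEq m' w m u) (h' : LowEq m' w' m u) (hlow : lowIdx m' w' = lowIdx m' w) :
    ∀ ℓ ∈ lowIdx m' w, w' ℓ = w ℓ := by
  obtain ⟨e, he, hm, hc, hv⟩ := h
  obtain ⟨e', he', hm', hc', hv'⟩ := h'
  rw [hlow] at hm' hc'
  have h1 : e = ⇑((lowIdx m' w).orderEmbOfFin hc) := Finset.orderEmbOfFin_unique hc hm he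
  have h2 : e' = ⇑((lowIdx m' w).orderEmbOfFin hc) := Finset.orderEmbOfFin_unique hc hm' he'
  intro ℓ hℓ
  have hℓr : ℓ ∈ Set.range e := by
    rw [h1, Finset.range_orderEmbOfFin]
    exact_mod_cast hℓ
  obtain ⟨i, rfl⟩ := hℓr
  have hee : e i = e' i := by rw [h1, h2]
  rw [hee, hv' i, ← hv i, hee]

end Sub

section Encode

open Cardinal

theorem exists_inj_fun (σ : Type u) [Infinite σ] (A : Type) [Fintype A] :
    ∃ J : (A → Option σ) → σ, Function.Injective J := by
  have h1 : #(A → Option σ) ≤ #σ := by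
    have e1 : #(A → Option σ) = #(ULift.{u} A → Option σ) :=
      Cardinal.mk_congr (Equiv.arrowCongr Equiv.ulift.symm (Equiv.refl _))
    rw [e1, ← Cardinal.power_def]
    have hopt : #(Option σ) = #σ := by
      rw [Cardinal.mk_option, Cardinal.add_one_eq (Cardinal.aleph0_le_mk σ)]
    rw [hopt]
    exact Cardinal.pow_le (Cardinal.aleph0_le_mk σ) (Cardinal.lt_aleph0_of_finite _)
  obtain ⟨J⟩ := (Cardinal.le_def _ _).1 h1
  exact ⟨J, J.injective⟩

end Encode
section Main

variable {σ : Type u}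

/-- The auxiliary coloring used in the inductive step: to a "lower part" `u` of length `m`
it associates the table of induced `C∘g₁`-colors of all closed tuples `w` (of any length
`m'' ≤ N` and any similarity type) whose non-top part is `u`. -/
def Phi (T : Set BS) (lst : BS → BS → Prop) (C : (m : ℕ) → (Fin m → BS) → σ)
    (g₁ : BS → BS) (N m : ℕ) (u : Fin m → BS) :
    ((m'' : Fin (N+1)) × SimTy m''.val) → Option σ := fun p =>
  if hw : ∃ w : Fin p.1.val → BS, Eseq T lst p.1.val w ∧ stype p.1.val w = p.2 ∧
      LowEq p.1.val w m u then
    some (C p.1.val fun i => g₁ (Classical.choose hw i))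
  else none

theorem Phi_eval {T : Set BS} {lst : BS → BS → Prop} {C : (m : ℕ) → (Fin m → BS) → σ}
    {g₁ : BS → BS} {N m : ℕ} {u : Fin m → BS}
    {p : (m'' : Fin (N+1)) × SimTy m''.val}
    (hw : ∃ w : Fin p.1.val → BS, Eseq T lst p.1.val w ∧ stype p.1.val w = p.2 ∧
      LowEq p.1.val w m u) :
    Phi T lst C g₁ N m u p = some (C p.1.val fun i => g₁ (Classical.choose hw i)) :=
  dif_pos hw

theorem main_lemma {κ : Ordinal} {T : Set BS} {lst : BS → BS → Prop} [Infinite σ]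
    (hT : ∀ f ∈ T, IsBSeq κ f) (h : ArrowEnd T lst T lst σ 1) (N : ℕ) :
    ∀ (r : ℕ) (C : (m : ℕ) → (Fin m → BS) → σ),
      ∃ g : BS → BS, IsEmb T T lst lst g ∧
        ∀ m, m ≤ N → ∀ a b : Fin m → BS, Eseq T lst m a → Eseq T lst m b →
          TSimilar m a b → (Finset.univ.image fun i => slen (a i)).card ≤ r →
          C m (fun i => g (a i)) = C m (fun i => g (b i)) := by
  intro r
  induction r with
  | zero =>
    intro C
    obtain ⟨g, hg, -⟩ := h C
    refine ⟨g, hg, ?_⟩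
    intro m hm a b ha hb hs hcard
    have hempty : IsEmpty (Fin m) := by
      by_contra hne
      rw [not_isEmpty_iff] at hne
      obtain ⟨i⟩ := hne
      have h1 : slen (a i) ∈ Finset.univ.image fun i => slen (a i) :=
        Finset.mem_image.mpr ⟨i, Finset.mem_univ _, rfl⟩
      have h2 := Finset.card_pos.mpr ⟨_, h1⟩
      omega
    have : a = b := funext fun i => hempty.elim i
    rw [this]
  | succ r IH =>
    intro C
    obtain ⟨g₁, hg₁, P₁⟩ := h C
    obtain ⟨J, hJ⟩ := exists_inj_fun σ ((m'' : Fin (N+1)) × SimTy m''.val)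
    obtain ⟨g₂, hg₂, P₂⟩ := IH (fun m u => J (Phi T lst C g₁ N m u))
    refine ⟨fun x => g₁ (g₂ x), hg₁.comp hg₂, ?_⟩
    intro m' hm' a b ha hb hsim hcard
    show C m' (fun i => g₁ (g₂ (a i))) = C m' (fun i => g₁ (g₂ (b i)))
    set s : Finset (Fin m') := lowIdx m' a with hs
    set m : ℕ := s.card with hmdef
    have hmN : m ≤ N := by
      have h1 : s.card ≤ m' := by
        simpa using Finset.card_le_univ s
      omega
    set e : Fin m → Fin m' := ⇑(s.orderEmbOfFin rfl) with hedef
    have he : StrictMono e := (s.orderEmbOfFin rfl).strictMono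
    have hemem : ∀ i, e i ∈ s := fun i => Finset.orderEmbOfFin_mem s rfl i
    have hesurj : ∀ ℓ ∈ s, ∃ i, e i = ℓ := by
      intro ℓ hℓ
      have : ℓ ∈ Set.range e := by
        rw [hedef, Finset.range_orderEmbOfFin]
        exact_mod_cast hℓ
      exact this
    set u : Fin m → BS := fun i => a (e i) with hudef
    set v : Fin m → BS := fun i => b (e i) with hvdef
    have hstab : stype m' a = stype m' b := similar_iff_stype.mp hsim
    have hlowb : lowIdx m' b = s := (lowIdx_eq_of_stype hstab).symm
    have hu : Eseq T lst m u := ha.sub hT e he hemem hesurj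
    have hv : Eseq T lst m v := hb.sub hT e he (by rw [hlowb]; exact hemem)
      (by rw [hlowb]; exact hesurj)
    have huv : TSimilar m u v := hsim.sub e
    -- the lower tuple has at most `r` levels
    have hucard : (Finset.univ.image fun i => slen (u i)).card ≤ r := by
      by_cases hne : (Finset.univ : Finset (Fin m)).Nonempty
      · have hm'ne : (Finset.univ : Finset (Fin m')).Nonempty := by
          obtain ⟨i, -⟩ := hne
          exact ⟨e i, Finset.mem_univ _⟩
        have hIane : (Finset.univ.image fun i => slen (a i)).Nonempty :=
          hm'ne.image _
        set M := (Finset.univ.image fun i => slen (a i)).max' hIane with hM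
        have hsub : (Finset.univ.image fun i => slen (u i)) ⊆
            (Finset.univ.image fun i => slen (a i)).erase M := by
          intro x hx
          obtain ⟨i, -, rfl⟩ := Finset.mem_image.mp hx
          refine Finset.mem_erase.mpr ⟨?_, Finset.mem_image.mpr ⟨e i, Finset.mem_univ _, rfl⟩⟩
          obtain ⟨k, hk⟩ := mem_lowIdx.mp (hemem i)
          have hkM : slen (a k) ≤ M := by
            rw [hM]
            exact Finset.le_max' (Finset.univ.image fun i => slen (a i)) (slen (a k))
              (Finset.mem_image.mpr ⟨k, Finset.mem_univ _, rfl⟩)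
          exact ne_of_lt (lt_of_lt_of_le hk hkM)
        have h1 := Finset.card_le_card hsub
        rw [Finset.card_erase_of_mem (Finset.max'_mem _ hIane)] at h1
        omega
      · rw [Finset.not_nonempty_iff_eq_empty] at hne
        rw [hne]
        simp
    -- key evaluation of `Phi`
    set p : (m'' : Fin (N+1)) × SimTy m''.val :=
      ⟨⟨m', by omega⟩, stype m' a⟩ with hp
    have key : ∀ (x : Fin m' → BS) (ux : Fin m → BS), Eseq T lst m' x →
        stype m' x = stype m' a → (∀ i, x (e i) = ux i) →
        Phi T lst C g₁ N m (fun i => g₂ (ux i)) p =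
          some (C m' fun i => g₁ (g₂ (x i))) := by
      intro x ux hx hstx hlowx
      have hxw : Eseq T lst m' (fun i => g₂ (x i)) := hx.map hT hg₂
      have hstw : stype m' (fun i => g₂ (x i)) = stype m' a := by
        rw [stype_map hg₂ hx, hstx]
      have hlowx' : lowIdx m' x = s := by
        rw [lowIdx_eq_of_stype hstx, hs]
      have hloww : lowIdx m' (fun i => g₂ (x i)) = s := by
        rw [lowIdx_eq_of_stype (stype_map hg₂ hx), hlowx']
      have hLow : LowEq m' (fun i => g₂ (x i)) m (fun i => g₂ (ux i)) := by
        refine ⟨e, he, ?_, ?_, ?_⟩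
        · rw [hloww]; exact hemem
        · rw [hloww]
        · intro i
          show g₂ (x (e i)) = g₂ (ux i)
          rw [hlowx i]
      have hwit : ∃ w : Fin m' → BS, Eseq T lst m' w ∧ stype m' w = stype m' a ∧
          LowEq m' w m (fun i => g₂ (ux i)) := ⟨_, hxw, hstw, hLow⟩
      rw [Phi_eval (p := p) hwit]
      obtain ⟨hw₀e, hw₀st, hw₀low⟩ := Classical.choose_spec hwit
      congr 1
      apply P₁ m' (Classical.choose hwit) (fun i => g₂ (x i)) hw₀e hxw
      · exact similar_iff_stype.mpr (hw₀st.trans hstw.symm)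
      · intro ℓ hℓ
        have hℓlow : ℓ ∈ lowIdx m' (Classical.choose hwit) :=
          one_le_topCount_iff.mp hℓ
        have hloweq : lowIdx m' (fun i => g₂ (x i)) = lowIdx m' (Classical.choose hwit) :=
          lowIdx_eq_of_stype (hstw.trans hw₀st.symm)
        exact hw₀low.agree hLow hloweq ℓ hℓlow
    have hD := P₂ m hmN u v hu hv huv hucard
    have hΦ : Phi T lst C g₁ N m (fun i => g₂ (u i)) =
        Phi T lst C g₁ N m (fun i => g₂ (v i)) := hJ hD
    have ea := key a u ha rfl (fun i => rfl)
    have eb := key b v hb hstab.symm (fun i => rfl)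
    have := congrFun hΦ p
    rw [ea, eb] at this
    exact Option.some.inj this

end Main

/-- Claim 1.11(2): if `𝒯 → (𝒯)^{end(1)}_σ` for an infinite cardinal (formalized: infinite
type) `σ` of colors, then `𝒯 → (𝒯)^n_σ` for every `n < ω`: for every coloring of
`eseq_n(𝒯)` there is an embedding `g` of `𝒯` into itself such that similar closed
`n`-tuples get the same induced color. -/
theorem stmt13 (κ : Ordinal) (T : Set BS) (hT : ∀ f ∈ T, IsBSeq κ f)
    (lst : BS → BS → Prop) (σ : Type*) (hσ : Infinite σ)
    (h : ArrowEnd T lst T lst σ 1) :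
    ∀ (n : ℕ) (c : (Fin n → BS) → σ), ∃ g : BS → BS, IsEmb T T lst lst g ∧
      ∀ a b : Fin n → BS, Eseq T lst n a → Eseq T lst n b → TSimilar n a b →
        c (fun i => g (a i)) = c (fun i => g (b i)) := by
  haveI := hσ
  intro n c
  obtain ⟨g, hg, P⟩ := main_lemma hT h n n
    (fun m u => if hm : m = n then c (fun i => u (Fin.cast hm.symm i)) else Classical.arbitrary σ)
  refine ⟨g, hg, ?_⟩
  intro a b ha hb hs
  have hcard : (Finset.univ.image fun i => slen (a i)).card ≤ n :=
    Finset.card_image_le.trans (by simp)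
  have := P n le_rfl a b ha hb hs hcard
  simpa using this

end
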